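/- Let V be the Vámos matroid: the matroid of rank 4 on the ground set {1,2,…,8} whose bases are all 4-element subsets except the five sets {1,2,3,4}, {1,2,5,6}, {3,4,5,6}, {3,4,7,8}, {5,6,7,8}. Then P_V(t) = 1 + 33t. -/

import Mathlib

open Polynomial Matroid

namespace KLPaper

variable {α : Type} [Fintype α]

/-- The contraction `M ⧸ C` of a set `C` in a matroid `M`, defined (as is standard,
see e.g. Oxley, Prop. 3.1.1) as the dual of the deletion of `C` from the dual matroid,
where deletion of `C` is restriction to `M.E \ C`.  Its ground set is `M.E \ C`. -/
noncomputable def contract (M : Matroid α) (C : Set α) : Matroid α :=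
  (M✶ ↾ (M.E \ C))✶

scoped infixl:75 " ⧸ " => KLPaper.contract

/-- The rank `rk M S` of a set `S` in a matroid `M`: the largest cardinality of an
independent subset of `S`. -/
noncomputable def rk (M : Matroid α) (S : Set α) : ℕ :=
  sSup {n | ∃ I, I ⊆ S ∧ M.Indep I ∧ I.ncard = n}

/-- The rank of a matroid: the rank of its ground set. -/
noncomputable def rank (M : Matroid α) : ℕ := rk M M.E

/-- A circuit of a matroid: a minimal dependent set, i.e. a dependent subset of the
ground set all of whose proper subsets are independent. -/
def IsCircuit (M : Matroid α) (C : Set α) : Prop :=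
  M.Dep C ∧ ∀ D ⊂ C, M.Indep D

/-- A hyperplane of a matroid: a maximal proper flat. -/
def IsHyperplane (M : Matroid α) (H : Set α) : Prop :=
  M.IsFlat H ∧ H ≠ M.E ∧ ∀ F, M.IsFlat F → H ⊂ F → F = M.E

/-- A stressed hyperplane of a matroid `M` of rank `k`: a hyperplane `H` such that every
`k`-element subset of `H` is a circuit of `M`. -/
def Stressed (M : Matroid α) (H : Set α) : Prop :=
  IsHyperplane M H ∧ ∀ C ⊆ H, C.ncard = rank M → IsCircuit M C

/-- `Mt` is the relaxation of `M` at the stressed hyperplane `H`: the matroid on the same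
ground set whose bases are exactly the bases of `M` together with all `(rank M)`-element
subsets of `H`. -/
def IsRelaxation (M Mt : Matroid α) (H : Set α) : Prop :=
  Mt.E = M.E ∧ ∀ B : Set α, Mt.IsBase B ↔ (M.IsBase B ∨ (B ⊆ H ∧ B.ncard = rank M))

/-- The characterization of the Kazhdan–Lusztig polynomials `P_M` and the `Z`-polynomials
`Z_M` of matroids (on a fixed finite type): (i) both equal `1` on matroids with empty
ground set; (ii) `2 · deg P_M < rk M` when the ground set is nonempty (the zero
polynomial being allowed); (iii) `Z_M` is palindromic of degree `rk M`;
(iv) `Z_M = Σ_{S ⊆ E} t^{rk S} · P_{M ⧸ S}`, the sum over all subsets `S` of `E`. -/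
def PZaxioms (P Z : Matroid α → Polynomial ℤ) : Prop :=
  (∀ M : Matroid α, M.E = ∅ → P M = 1 ∧ Z M = 1) ∧
  (∀ M : Matroid α, M.E ≠ ∅ → (P M = 0 ∨ 2 * (P M).natDegree < rank M)) ∧
  (∀ M : Matroid α, (Z M).natDegree ≤ rank M ∧
      ∀ i ≤ rank M, (Z M).coeff i = (Z M).coeff (rank M - i)) ∧
  (∀ M : Matroid α,
      Z M = ∑ S ∈ M.E.toFinite.toFinset.powerset,
        X ^ (rk M (S : Set α)) * P (M ⧸ (S : Set α)))

set_option maxRecDepth 40000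

section RkBasic

variable {M : Matroid α} {S X I B : Set α}

lemma rkSet_nonempty (M : Matroid α) (S : Set α) :
    {n | ∃ I, I ⊆ S ∧ M.Indep I ∧ I.ncard = n}.Nonempty :=
  ⟨0, ∅, Set.empty_subset _, M.empty_indep, Set.ncard_empty _⟩

lemma rkSet_bddAbove (M : Matroid α) (S : Set α) :
    BddAbove {n | ∃ I, I ⊆ S ∧ M.Indep I ∧ I.ncard = n} := by
  refine ⟨Fintype.card α, ?_⟩
  rintro n ⟨I, -, -, rfl⟩
  simpa [Set.ncard_univ] using Set.ncard_le_ncard (Set.subset_univ I) Set.finite_univ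

lemma le_rk (h : I ⊆ S) (hI : M.Indep I) : I.ncard ≤ rk M S :=
  le_csSup (rkSet_bddAbove M S) ⟨I, h, hI, rfl⟩

lemma rk_le {n : ℕ} (h : ∀ I, I ⊆ S → M.Indep I → I.ncard ≤ n) : rk M S ≤ n := by
  refine csSup_le (rkSet_nonempty M S) ?_
  rintro m ⟨I, hIS, hI, rfl⟩
  exact h I hIS hI

lemma rk_mono (h : S ⊆ X) : rk M S ≤ rk M X :=
  rk_le fun I hIS hI => le_rk (hIS.trans h) hI

lemma rk_le_ncard (S : Set α) : rk M S ≤ S.ncard :=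
  rk_le fun I hIS _ => Set.ncard_le_ncard hIS (Set.toFinite S)

@[simp] lemma rk_empty (M : Matroid α) : rk M ∅ = 0 :=
  Nat.le_zero.mp (rk_le fun I hIS _ => by
    simp [Set.subset_empty_iff.mp hIS])

lemma rk_eq_of_restrict_base (hB : (M ↾ X).IsBase B) : rk M X = B.ncard := by
  have hBX : M.Indep B ∧ B ⊆ X := by
    simpa using hB.indep
  refine le_antisymm (rk_le fun I hIS hI => ?_) (le_rk hBX.2 hBX.1)
  have hI' : (M ↾ X).Indep I := by simp [hI, hIS]
  obtain ⟨B', hB', hIB'⟩ := hI'.exists_isBase_superset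
  calc I.ncard ≤ B'.ncard := Set.ncard_le_ncard hIB' (Set.toFinite B')
    _ = B.ncard := hB'.ncard_eq_ncard_of_isBase hB

lemma rk_eq_of_base (hB : M.IsBase B) : rank M = B.ncard := by
  have := hB.isBasis_ground.restrict_isBase
  rw [rank]
  exact rk_eq_of_restrict_base (by simpa [restrict_ground_eq_self] using this)

lemma rk_restrict (M : Matroid α) (R X : Set α) (hXR : X ⊆ R) :
    rk (M ↾ R) X = rk M X := by
  unfold rk
  congr 1
  ext n
  constructor
  · rintro ⟨I, hIX, hI, rfl⟩
    exact ⟨I, hIX, ((restrict_indep_iff).mp hI).1, rfl⟩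
  · rintro ⟨I, hIX, hI, rfl⟩
    exact ⟨I, hIX, (restrict_indep_iff).mpr ⟨hI, hIX.trans hXR⟩, rfl⟩

/-- dual rank formula, additive form -/
lemma rk_dual_compl (hX : X ⊆ M.E) :
    rk M✶ (M.E \ X) + rank M = (M.E \ X).ncard + rk M X := by
  obtain ⟨I, hI⟩ := M.exists_isBasis X hX
  obtain ⟨B, hB, hIB⟩ := hI.exists_isBase
  have hBX : M.IsBasis (B ∩ X) X := by rwa [← hIB]
  have hdual := hB.compl_inter_isBasis_of_inter_isBasis hBX
  -- rk M✶ (M.E \ X) = ((M.E \ B) ∩ (M.E \ X)).ncard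
  have h1 : rk M✶ (M.E \ X) = ((M.E \ B) ∩ (M.E \ X)).ncard := by
    have := hdual.restrict_isBase
    exact rk_eq_of_restrict_base (M := M✶) this
  have h2 : rank M = B.ncard := rk_eq_of_base hB
  have h3 : rk M X = (B ∩ X).ncard := rk_eq_of_restrict_base hBX.restrict_isBase
  have hBE : B ⊆ M.E := hB.subset_ground
  have hset : M.E \ B ∩ (M.E \ X) = M.E \ (B ∪ X) := by
    rw [Set.diff_inter_diff]
  have e1 : (M.E \ (B ∪ X)).ncard + (B ∪ X).ncard = M.E.ncard :=
    Set.ncard_diff_add_ncard_of_subset (Set.union_subset hBE hX)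
  have e2 : (M.E \ X).ncard + X.ncard = M.E.ncard :=
    Set.ncard_diff_add_ncard_of_subset hX
  have e3 : (B ∪ X).ncard + (B ∩ X).ncard = B.ncard + X.ncard :=
    Set.ncard_union_add_ncard_inter B X
  rw [h1, h2, h3, hset]
  omega

end RkBasic



variable {α : Type} [Fintype α]

section Contract

variable {M : Matroid α} {A X : Set α}

@[simp] lemma contract_ground (M : Matroid α) (C : Set α) : (M ⧸ C).E = M.E \ C := rfl

lemma contract_empty (M : Matroid α) : (M ⧸ (∅ : Set α)) = M := by
  unfold contract
  rw [Set.diff_empty, ← dual_ground, restrict_ground_eq_self, dual_dual]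

lemma rk_contract (hA : A ⊆ M.E) (hX : X ⊆ M.E \ A) :
    rk (M ⧸ A) X + rk M A = rk M (X ∪ A) := by
  set N := M✶ ↾ (M.E \ A) with hN
  have hNE : N.E = M.E \ A := rfl
  have hX2 : (M.E \ A) \ X ⊆ M.E \ A := Set.diff_subset
  have hD1 : rk N✶ (N.E \ ((M.E \ A) \ X)) + rank N
      = (N.E \ ((M.E \ A) \ X)).ncard + rk N ((M.E \ A) \ X) :=
    rk_dual_compl (by rw [hNE]; exact hX2)
  have hcancel : (M.E \ A) \ ((M.E \ A) \ X) = X := Set.diff_diff_cancel_left hX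
  have hrankN : rank N = rk M✶ (M.E \ A) := by
    rw [rank, hNE, hN, rk_restrict _ _ _ subset_rfl]
  have hNX2 : rk N ((M.E \ A) \ X) = rk M✶ ((M.E \ A) \ X) :=
    rk_restrict _ _ _ hX2
  have hD2 : rk M✶ (M.E \ A) + rank M = (M.E \ A).ncard + rk M A := rk_dual_compl hA
  have hsetu : (M.E \ A) \ X = M.E \ (X ∪ A) := by
    rw [Set.diff_diff, Set.union_comm]
  have hD3 : rk M✶ (M.E \ (X ∪ A)) + rank M = (M.E \ (X ∪ A)).ncard + rk M (X ∪ A) :=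
    rk_dual_compl (Set.union_subset (hX.trans Set.diff_subset) hA)
  have hcard : (M.E \ (X ∪ A)).ncard + X.ncard = (M.E \ A).ncard := by
    rw [← hsetu]
    exact Set.ncard_diff_add_ncard_of_subset hX
  rw [hNE, hcancel, hrankN, hNX2, hsetu] at hD1
  have : rk N✶ X = rk (M ⧸ A) X := rfl
  rw [this] at hD1
  omega

lemma rank_contract (hA : A ⊆ M.E) : rank (M ⧸ A) + rk M A = rank M := by
  have := rk_contract (M := M) hA (X := M.E \ A) subset_rfl
  rwa [Set.diff_union_of_subset hA] at this

lemma rk_contract_singleton {e : α} (hA : A ⊆ M.E) (he : e ∈ M.E \ A) :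
    rk (M ⧸ A) {e} + rk M A = rk M (insert e A) := by
  have := rk_contract (M := M) hA (X := {e}) (by simpa using he)
  rwa [Set.singleton_union] at this

end Contract



variable {α : Type} [Fintype α]

section Loops

variable {M : Matroid α} {S X : Set α} {e : α}

lemma rk_eq_zero_iff : rk M S = 0 ↔ ∀ e ∈ S, ¬ M.Indep {e} := by
  constructor
  · intro h e he hind
    have h1 : ({e} : Set α).ncard ≤ rk M S := le_rk (Set.singleton_subset_iff.mpr he) hind
    rw [Set.ncard_singleton] at h1
    omega
  · intro h
    refine Nat.le_zero.mp (rk_le fun I hIS hI => ?_)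
    have : I = ∅ := by
      rw [Set.eq_empty_iff_forall_notMem]
      intro e heI
      exact h e (hIS heI) (hI.subset (Set.singleton_subset_iff.mpr heI))
    simp [this]

lemma rk_singleton_le (M : Matroid α) (e : α) : rk M {e} ≤ 1 := by
  simpa using rk_le_ncard (M := M) {e}

lemma rk_singleton_eq_one_iff : rk M {e} = 1 ↔ M.Indep {e} := by
  constructor
  · intro h
    by_contra hind
    have : rk M {e} = 0 := rk_eq_zero_iff.mpr (by simpa using hind)
    omega
  · intro h
    refine le_antisymm (rk_singleton_le M e) ?_
    simpa using le_rk subset_rfl h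

lemma rk_union_right_eq (hS : rk M S = 0) (X : Set α) : rk M (X ∪ S) = rk M X := by
  refine le_antisymm (rk_le fun I hIS hI => ?_) (rk_mono Set.subset_union_left)
  refine le_rk (fun x hx => ?_) hI
  rcases hIS hx with h | h
  · exact h
  · exact absurd (hI.subset (Set.singleton_subset_iff.mpr hx))
      (rk_eq_zero_iff.mp hS x h)

lemma exists_indep_singleton_of_rank_pos (h : 1 ≤ rank M) : ∃ e ∈ M.E, M.Indep {e} := by
  by_contra hc
  push_neg at hc
  have : rank M = 0 := rk_eq_zero_iff.mpr hc
  omega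

lemma ground_nonempty_of_rank_pos (h : 1 ≤ rank M) : M.E ≠ ∅ := by
  obtain ⟨e, he, -⟩ := exists_indep_singleton_of_rank_pos h
  exact fun hE => by simp [hE] at he

lemma rank_eq_zero_of_ground_empty (hE : M.E = ∅) : rank M = 0 := by
  rw [rank, hE]
  exact rk_empty M

end Loops



variable {α : Type} [Fintype α]

section Axioms

lemma coe_toFinset_ground (M : Matroid α) : (M.E.toFinite.toFinset : Set α) = M.E :=
  Set.Finite.coe_toFinset _



variable {P Z : Matroid α → Polynomial ℤ} (hPZ : PZaxioms P Z)
include hPZ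

lemma Z_coeff (M : Matroid α) (j : ℕ) :
    (Z M).coeff j = ∑ S ∈ M.E.toFinite.toFinset.powerset,
      (if rk M (S : Set α) ≤ j then (P (M ⧸ (S : Set α))).coeff (j - rk M (S : Set α))
        else 0) := by
  rw [hPZ.2.2.2 M, Polynomial.finset_sum_coeff]
  refine Finset.sum_congr rfl fun S _ => ?_
  rw [mul_comm, Polynomial.coeff_mul_X_pow']

lemma P_eq_zero_of_rank_zero {M : Matroid α} (hE : M.E ≠ ∅) (hr : rank M = 0) :
    P M = 0 := by
  rcases hPZ.2.1 M hE with h | h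
  · exact h
  · omega

lemma Z_coeff_top (M : Matroid α) : (Z M).coeff (rank M) = 1 := by
  by_cases hE : M.E = ∅
  · rw [(hPZ.1 M hE).2, rank_eq_zero_of_ground_empty hE]
    simp
  rw [Z_coeff hPZ]
  rw [Finset.sum_eq_single_of_mem (M.E.toFinite.toFinset) (Finset.mem_powerset_self _)]
  · rw [coe_toFinset_ground]
    have hrk : rk M M.E = rank M := rfl
    rw [hrk, if_pos le_rfl, Nat.sub_self]
    have hg : (M ⧸ M.E).E = ∅ := by
      rw [contract_ground, Set.diff_self]
    rw [(hPZ.1 _ hg).1]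
    simp
  · intro S hS hSne
    have hsub : (S : Set α) ⊆ M.E := by
      rw [← coe_toFinset_ground M]
      exact_mod_cast Finset.mem_powerset.mp hS
    have hne : (S : Set α) ≠ M.E := by
      intro h
      apply hSne
      apply Finset.coe_injective
      rw [h, coe_toFinset_ground]
    have hgne : (M ⧸ (S : Set α)).E ≠ ∅ := by
      rw [contract_ground]
      intro h
      exact hne (le_antisymm hsub (Set.diff_eq_empty.mp h))
    rcases hPZ.2.1 _ hgne with h0 | hdeg
    · simp [h0]
    · have hrc : rank (M ⧸ (S : Set α)) + rk M (S : Set α) = rank M :=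
        rank_contract hsub
      split_ifs with hle
      · refine Polynomial.coeff_eq_zero_of_natDegree_lt ?_
        omega
      · rfl

lemma Z_coeff_zero (M : Matroid α) : (Z M).coeff 0 = 1 := by
  have h := (hPZ.2.2.1 M).2 0 (Nat.zero_le _)
  rw [h, Nat.sub_zero, Z_coeff_top hPZ]

end Axioms



variable {α : Type} [Fintype α]

section G1

open scoped Classical

variable {P Z : Matroid α → Polynomial ℤ} (hPZ : PZaxioms P Z)
include hPZ

theorem coeff0_P_aux : ∀ (n : ℕ) (M : Matroid α), M.E.ncard = n → 1 ≤ rank M →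
    (P M).coeff 0 = if (∀ e ∈ M.E, rk M {e} = 1) then 1 else 0 := by
  intro n
  induction n using Nat.strong_induction_on with
  | _ n IH =>
  intro M hn hrk
  classical
  set Ef := M.E.toFinite.toFinset with hEf
  set L : Finset α := Ef.filter (fun e => ¬ M.Indep {e}) with hLdef
  have hcoeEf : (Ef : Set α) = M.E := Set.Finite.coe_toFinset _
  have hrkS : ∀ S : Finset α, S ∈ Ef.powerset → (rk M (S : Set α) = 0 ↔ S ⊆ L) := by
    intro S hS
    have hSE : S ⊆ Ef := Finset.mem_powerset.mp hS
    rw [rk_eq_zero_iff]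
    constructor
    · intro h e he
      exact Finset.mem_filter.mpr ⟨hSE he, h e (by exact_mod_cast he)⟩
    · intro h e he
      have heS : e ∈ S := by exact_mod_cast he
      exact (Finset.mem_filter.mp (h heS)).2
  have hLE : L ⊆ Ef := Finset.filter_subset _ _
  have hPP : L.powerset ⊆ Ef.powerset := Finset.powerset_mono.mpr hLE
  have h1 : (1 : ℤ) = ∑ S ∈ L.powerset, (P (M ⧸ (S : Set α))).coeff 0 := by
    have h0 := Z_coeff_zero hPZ M
    rw [Z_coeff hPZ M 0] at h0
    rw [← h0]
    calc ∑ S ∈ M.E.toFinite.toFinset.powerset,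
          (if rk M (S : Set α) ≤ 0 then (P (M ⧸ (S : Set α))).coeff (0 - rk M (S : Set α))
            else 0)
        = ∑ S ∈ L.powerset,
          (if rk M (S : Set α) ≤ 0 then (P (M ⧸ (S : Set α))).coeff (0 - rk M (S : Set α))
            else 0) := by
          refine (Finset.sum_subset hPP ?_).symm
          intro S hS hSL
          have hne : ¬ rk M (S : Set α) ≤ 0 := by
            rw [Nat.le_zero, hrkS S hS]
            intro h
            exact hSL (Finset.mem_powerset.mpr h)
          rw [if_neg hne]
      _ = ∑ S ∈ L.powerset, (P (M ⧸ (S : Set α))).coeff 0 := by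
          refine Finset.sum_congr rfl fun S hS => ?_
          have hle : rk M (S : Set α) ≤ 0 := by
            rw [Nat.le_zero, hrkS S (hPP hS)]
            exact Finset.mem_powerset.mp hS
          rw [if_pos hle, Nat.zero_sub]
  have hterm : ∀ S ∈ L.powerset, S ≠ ∅ →
      (P (M ⧸ (S : Set α))).coeff 0 = if S = L then 1 else 0 := by
    intro S hSL hSne
    have hSEf : S ∈ Ef.powerset := hPP hSL
    have hS0 : rk M (S : Set α) = 0 := (hrkS S hSEf).mpr (Finset.mem_powerset.mp hSL)
    have hsub : (S : Set α) ⊆ M.E := by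
      rw [← hcoeEf]
      exact_mod_cast Finset.mem_powerset.mp hSEf
    have hrkc : rank (M ⧸ (S : Set α)) = rank M := by
      have := rank_contract (M := M) hsub
      omega
    have hgnd : (M ⧸ (S : Set α)).E = M.E \ (S : Set α) := contract_ground M _
    obtain ⟨e, heS⟩ := Finset.nonempty_of_ne_empty hSne
    have hlt : (M.E \ (S : Set α)).ncard < n := by
      rw [← hn]
      refine Set.ncard_lt_ncard ?_ (Set.toFinite _)
      constructor
      · exact Set.diff_subset
      · intro hsup
        have : (e : α) ∈ M.E \ (S : Set α) := hsup (hsub (by exact_mod_cast heS))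
        exact this.2 (by exact_mod_cast heS)
    have hloop : ∀ f ∈ M.E \ (S : Set α), rk (M ⧸ (S : Set α)) {f} = rk M {f} := by
      intro f hf
      have h := rk_contract_singleton (M := M) hsub hf
      rw [hS0, add_zero, Set.insert_eq, rk_union_right_eq hS0] at h
      exact h
    have hIH := IH _ hlt (M ⧸ (S : Set α)) (by rw [hgnd]) (by rw [hrkc]; exact hrk)
    rw [hIH]
    have hiff : (∀ f ∈ (M ⧸ (S : Set α)).E, rk (M ⧸ (S : Set α)) {f} = 1) ↔ S = L := by
      constructor
      · intro h
        refine Finset.Subset.antisymm (Finset.mem_powerset.mp hSL) ?_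
        intro x hx
        by_contra hxS
        have hxE : x ∈ M.E := by rw [← hcoeEf]; exact_mod_cast (Finset.mem_filter.mp hx).1
        have hxd : x ∈ (M ⧸ (S : Set α)).E := by
          rw [hgnd]
          exact ⟨hxE, by exact_mod_cast hxS⟩
        have h1x := h x hxd
        rw [hgnd] at hxd
        rw [hloop x hxd, rk_singleton_eq_one_iff] at h1x
        exact (Finset.mem_filter.mp hx).2 h1x
      · rintro rfl
        intro f hf
        rw [hgnd] at hf
        rw [hloop f hf, rk_singleton_eq_one_iff]
        have hfEf : f ∈ Ef := by
          rw [← hcoeEf] at hf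
          exact_mod_cast hf.1
        by_contra hind
        exact (by exact_mod_cast hf.2 : f ∉ L) (Finset.mem_filter.mpr ⟨hfEf, hind⟩)
    split_ifs with hA hB hB
    · rfl
    · exact absurd (hiff.mp hA) hB
    · exact absurd (hiff.mpr hB) hA
    · rfl
  have hmemL : ∀ e ∈ M.E, (rk M {e} = 1 ↔ e ∉ L) := by
    intro e he
    have heEf : e ∈ Ef := by rw [← hcoeEf] at he; exact_mod_cast he
    rw [rk_singleton_eq_one_iff]
    constructor
    · intro h hL
      exact (Finset.mem_filter.mp hL).2 h
    · intro h
      by_contra hind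
      exact h (Finset.mem_filter.mpr ⟨heEf, hind⟩)
  rcases eq_or_ne L ∅ with hL0 | hL0
  · rw [hL0] at h1
    rw [Finset.powerset_empty, Finset.sum_singleton] at h1
    rw [Finset.coe_empty, contract_empty] at h1
    rw [if_pos, ← h1]
    intro e he
    rw [hmemL e he, hL0]
    exact Finset.notMem_empty e
  · rw [← Finset.add_sum_erase _ _ (Finset.empty_mem_powerset L)] at h1
    rw [Finset.coe_empty, contract_empty] at h1
    have h2 : ∑ S ∈ (L.powerset).erase ∅, (P (M ⧸ (S : Set α))).coeff 0 = 1 := by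
      rw [Finset.sum_eq_single_of_mem L
        (Finset.mem_erase.mpr ⟨hL0, Finset.mem_powerset_self L⟩)]
      · rw [hterm L (Finset.mem_powerset_self L) hL0, if_pos rfl]
      · intro S hS hSne
        have hS' := Finset.mem_erase.mp hS
        rw [hterm S hS'.2 hS'.1, if_neg hSne]
    rw [h2] at h1
    rw [if_neg]
    · omega
    · intro h
      obtain ⟨x, hx⟩ := Finset.nonempty_of_ne_empty hL0
      have hxE : x ∈ M.E := by
        rw [← hcoeEf]
        exact_mod_cast (Finset.mem_filter.mp hx).1
      exact ((hmemL x hxE).mp (h x hxE)) hx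

theorem coeff0_P_loopless {M : Matroid α} (hrk : 1 ≤ rank M)
    (h : ∀ e ∈ M.E, rk M {e} = 1) : (P M).coeff 0 = 1 := by
  rw [coeff0_P_aux hPZ M.E.ncard M rfl hrk, if_pos h]

theorem coeff0_P_loop {M : Matroid α} (hrk : 1 ≤ rank M)
    (h : ¬ ∀ e ∈ M.E, rk M {e} = 1) : (P M).coeff 0 = 0 := by
  rw [coeff0_P_aux hPZ M.E.ncard M rfl hrk, if_neg h]

end G1


set_option maxRecDepth 40000


def C5 : Finset (Finset (Fin 8)) := {{0,1,2,3},{0,1,4,5},{2,3,4,5},{2,3,6,7},{4,5,6,7}}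

def vr (s : Finset (Fin 8)) : ℕ := if s.card ≤ 3 then s.card else if s ∈ C5 then 3 else 4

def noLoopExt (s : Finset (Fin 8)) : Prop :=
  ∀ e ∈ (Finset.univ \ s), vr (insert e s) = vr s + 1

instance : DecidablePred noLoopExt := fun s => by unfold noLoopExt; infer_instance

lemma C5_card : ∀ s ∈ C5, s.card = 4 := by decide

lemma vamos_extend : ∀ i : Finset (Fin 8), (i.card ≤ 3 ∨ (i.card = 4 ∧ i ∉ C5)) →
    ∃ b : Finset (Fin 8), (b.card = 4 ∧ b ∉ C5) ∧ i ⊆ b := by decide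

lemma vamos_witness : ∀ s : Finset (Fin 8),
    ∃ i : Finset (Fin 8), i ⊆ s ∧ (i.card ≤ 3 ∨ (i.card = 4 ∧ i ∉ C5)) ∧ i.card = vr s := by
  decide

lemma set_eq_coe (B : Set (Fin 8)) : ∃ b : Finset (Fin 8), B = ↑b :=
  ⟨B.toFinite.toFinset, (Set.Finite.coe_toFinset _).symm⟩

section Vamos

variable {P Z : Matroid (Fin 8) → Polynomial ℤ} (hPZ : PZaxioms P Z)
variable {V : Matroid (Fin 8)} (hVE : V.E = Set.univ)
variable (hVB : ∀ B : Set (Fin 8), V.IsBase B ↔ B.ncard = 4 ∧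
        B ∉ ({{0, 1, 2, 3}, {0, 1, 4, 5}, {2, 3, 4, 5}, {2, 3, 6, 7}, {4, 5, 6, 7}} :
          Set (Set (Fin 8))))

include hVB in
lemma base_coe_iff (b : Finset (Fin 8)) : V.IsBase ↑b ↔ (b.card = 4 ∧ b ∉ C5) := by
  rw [hVB, Set.ncard_coe_finset]
  have e1 : ({0,1,2,3} : Set (Fin 8)) = (({0,1,2,3} : Finset (Fin 8)) : Set (Fin 8)) := by simp
  have e2 : ({0,1,4,5} : Set (Fin 8)) = (({0,1,4,5} : Finset (Fin 8)) : Set (Fin 8)) := by simp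
  have e3 : ({2,3,4,5} : Set (Fin 8)) = (({2,3,4,5} : Finset (Fin 8)) : Set (Fin 8)) := by simp
  have e4 : ({2,3,6,7} : Set (Fin 8)) = (({2,3,6,7} : Finset (Fin 8)) : Set (Fin 8)) := by simp
  have e5 : ({4,5,6,7} : Set (Fin 8)) = (({4,5,6,7} : Finset (Fin 8)) : Set (Fin 8)) := by simp
  constructor
  · rintro ⟨h4, hmem⟩
    refine ⟨h4, fun hb => hmem ?_⟩
    simp only [Set.mem_insert_iff, Set.mem_singleton_iff, e1, e2, e3, e4, e5, Finset.coe_inj]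
    simpa [C5, Finset.mem_insert, Finset.mem_singleton] using hb
  · rintro ⟨h4, hmem⟩
    refine ⟨h4, fun hb => hmem ?_⟩
    simp only [Set.mem_insert_iff, Set.mem_singleton_iff, e1, e2, e3, e4, e5,
      Finset.coe_inj] at hb
    simpa [C5, Finset.mem_insert, Finset.mem_singleton] using hb

include hVB in
lemma vIndep_coe (i : Finset (Fin 8)) :
    V.Indep ↑i ↔ (i.card ≤ 3 ∨ (i.card = 4 ∧ i ∉ C5)) := by
  rw [indep_iff]
  constructor
  · rintro ⟨B, hB, hiB⟩
    obtain ⟨b, rfl⟩ := set_eq_coe B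
    rw [base_coe_iff hVB] at hB
    have hsub : i ⊆ b := by exact_mod_cast hiB
    have hle : i.card ≤ 4 := hB.1 ▸ Finset.card_le_card hsub
    rcases Nat.lt_or_ge i.card 4 with h | h
    · exact Or.inl (by omega)
    · have : i = b := Finset.eq_of_subset_of_card_le hsub (by omega)
      exact Or.inr ⟨by omega, this ▸ hB.2⟩
  · intro h
    obtain ⟨b, hb, hib⟩ := vamos_extend i h
    exact ⟨↑b, (base_coe_iff hVB b).mpr hb, by exact_mod_cast hib⟩

include hVB in
lemma rk_V_coe (s : Finset (Fin 8)) : rk V ↑s = vr s := by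
  refine le_antisymm (rk_le fun I hIs hI => ?_) ?_
  · obtain ⟨i, rfl⟩ := set_eq_coe I
    rw [vIndep_coe hVB] at hI
    have hsub : i ⊆ s := by exact_mod_cast hIs
    have hcard := Finset.card_le_card hsub
    rw [Set.ncard_coe_finset]
    rcases hI with h3 | ⟨h4, hni⟩
    · have : 3 ≤ vr s ∨ vr s = s.card := by unfold vr; split_ifs <;> omega
      omega
    · have hs4 : 4 ≤ s.card := by omega
      unfold vr
      rw [if_neg (by omega)]
      split_ifs with hC
      · have : s.card = 4 := C5_card s hC
        have : i = s := Finset.eq_of_subset_of_card_le hsub (by omega)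
        exact absurd (this ▸ hC) hni
      · omega
  · obtain ⟨i, his, hind, hcard⟩ := vamos_witness s
    have h := le_rk (M := V) (S := (↑s : Set (Fin 8))) (by exact_mod_cast his)
      ((vIndep_coe hVB i).mpr hind)
    rwa [Set.ncard_coe_finset, hcard] at h

include hVE in
lemma ground_toFinset_V : V.E.toFinite.toFinset = (Finset.univ : Finset (Fin 8)) := by
  ext x
  simp [Set.Finite.mem_toFinset, hVE]

include hVE in
lemma coe_sub_ground (s : Finset (Fin 8)) : (↑s : Set (Fin 8)) ⊆ V.E := by
  rw [hVE]; exact Set.subset_univ _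

include hVE hVB in
lemma rank_V : rank V = 4 := by
  rw [rank, hVE, ← Finset.coe_univ, rk_V_coe hVB]
  decide

include hVE hVB in
lemma rank_contract_V (s : Finset (Fin 8)) :
    rank (V ⧸ (↑s : Set (Fin 8))) + vr s = 4 := by
  have h := rank_contract (M := V) (coe_sub_ground hVE s)
  rwa [rk_V_coe hVB, rank_V hVE hVB] at h

include hVE in
lemma contract_ground_V (s : Finset (Fin 8)) :
    (V ⧸ (↑s : Set (Fin 8))).E = ↑(Finset.univ \ s) := by
  rw [contract_ground, hVE, Finset.coe_sdiff, Finset.coe_univ]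

include hVE hVB in
lemma rk_sing_contract (s : Finset (Fin 8)) (f : Fin 8) (hf : f ∉ s) :
    rk (V ⧸ (↑s : Set (Fin 8))) {f} + vr s = vr (insert f s) := by
  have hfE : f ∈ V.E \ (↑s : Set (Fin 8)) := by
    rw [hVE]
    exact ⟨Set.mem_univ f, by exact_mod_cast hf⟩
  have h := rk_contract_singleton (M := V) (coe_sub_ground hVE s) hfE
  rw [rk_V_coe hVB, ← Finset.coe_insert, rk_V_coe hVB] at h
  exact h

include hVE hVB in
lemma contract_loopless (s : Finset (Fin 8)) (h : noLoopExt s) :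
    ∀ f ∈ (V ⧸ (↑s : Set (Fin 8))).E, rk (V ⧸ (↑s : Set (Fin 8))) {f} = 1 := by
  intro f hf
  rw [contract_ground_V hVE] at hf
  have hfs : f ∉ s := by
    have := Finset.mem_coe.mp hf
    simp only [Finset.mem_sdiff] at this
    exact this.2
  have h1 := rk_sing_contract hVE hVB s f hfs
  have h2 := h f (Finset.mem_sdiff.mpr ⟨Finset.mem_univ f, hfs⟩)
  omega

include hVE hVB in
lemma contract_loopy (s : Finset (Fin 8)) (h : ¬ noLoopExt s) :
    ¬ ∀ f ∈ (V ⧸ (↑s : Set (Fin 8))).E, rk (V ⧸ (↑s : Set (Fin 8))) {f} = 1 := by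
  intro hall
  apply h
  intro e he
  rw [Finset.mem_sdiff] at he
  have h1 := rk_sing_contract hVE hVB s e he.2
  have h2 := hall e (by
    rw [contract_ground_V hVE]
    exact Finset.mem_coe.mpr (Finset.mem_sdiff.mpr ⟨Finset.mem_univ e, he.2⟩))
  omega

include hPZ hVE hVB in
lemma Pcoeff_flat (s : Finset (Fin 8)) (h3 : vr s ≤ 3) (h : noLoopExt s) :
    (P (V ⧸ (↑s : Set (Fin 8)))).coeff 0 = 1 := by
  refine coeff0_P_loopless hPZ ?_ (contract_loopless hVE hVB s h)
  have := rank_contract_V hVE hVB s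
  omega

include hPZ hVE hVB in
lemma Pcoeff_nonflat (s : Finset (Fin 8)) (h3 : vr s ≤ 3) (h : ¬ noLoopExt s) :
    (P (V ⧸ (↑s : Set (Fin 8)))).coeff 0 = 0 := by
  refine coeff0_P_loop hPZ ?_ (contract_loopy hVE hVB s h)
  have := rank_contract_V hVE hVB s
  omega

include hPZ hVE hVB in
lemma Pcoeff_hi (s : Finset (Fin 8)) (j : ℕ) (hj : 4 - vr s ≤ 2 * j) :
    (P (V ⧸ (↑s : Set (Fin 8)))).coeff j = 0 ∨ s = Finset.univ := by
  rcases eq_or_ne s Finset.univ with hu | hu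
  · exact Or.inr hu
  refine Or.inl ?_
  have hgne : (V ⧸ (↑s : Set (Fin 8))).E ≠ ∅ := by
    rw [contract_ground_V hVE]
    intro hcon
    have : Finset.univ \ s = ∅ := by exact_mod_cast hcon
    have h2 := Finset.sdiff_eq_empty_iff_subset.mp this
    exact hu (Finset.univ_subset_iff.mp h2)
  rcases hPZ.2.1 _ hgne with h0 | hdeg
  · simp [h0]
  · refine Polynomial.coeff_eq_zero_of_natDegree_lt ?_
    have := rank_contract_V hVE hVB s
    omega

end Vamos



section Final

lemma singleton_noLoop : ∀ s : Finset (Fin 8), s.card = 1 → noLoopExt s := by decide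

lemma singleton_vr : ∀ e : Fin 8, vr {e} = 1 := by decide

lemma univ_vr : vr (Finset.univ : Finset (Fin 8)) = 4 := by decide

variable {P Z : Matroid (Fin 8) → Polynomial ℤ} (hPZ : PZaxioms P Z)
variable {V : Matroid (Fin 8)} (hVE : V.E = Set.univ)
variable (hVB : ∀ B : Set (Fin 8), V.IsBase B ↔ B.ncard = 4 ∧
        B ∉ ({{0, 1, 2, 3}, {0, 1, 4, 5}, {2, 3, 4, 5}, {2, 3, 6, 7}, {4, 5, 6, 7}} :
          Set (Set (Fin 8))))

include hPZ hVE hVB in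
lemma Zcoeff3_V : (Z V).coeff 3 = 41 := by
  rw [Z_coeff hPZ V 3, ground_toFinset_V hVE]
  have hterm : ∀ S ∈ (Finset.univ : Finset (Fin 8)).powerset,
      (if rk V (S : Set (Fin 8)) ≤ 3
        then (P (V ⧸ (S : Set (Fin 8)))).coeff (3 - rk V (S : Set (Fin 8))) else 0)
      = (if vr S = 3 ∧ noLoopExt S then (1 : ℤ) else 0) := by
    intro S _
    rw [rk_V_coe hVB]
    by_cases h3 : vr S ≤ 3
    · rw [if_pos h3]
      rcases Nat.lt_or_ge (vr S) 3 with hlt | hge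
      · rcases Pcoeff_hi hPZ hVE hVB S (3 - vr S) (by omega) with h0 | huniv
        · rw [h0, if_neg (by rintro ⟨hc, -⟩; omega)]
        · rw [huniv, univ_vr] at hlt
          omega
      · have hv3 : vr S = 3 := by omega
        rw [show 3 - vr S = 0 from by omega]
        by_cases hnl : noLoopExt S
        · rw [Pcoeff_flat hPZ hVE hVB S (by omega) hnl, if_pos ⟨hv3, hnl⟩]
        · rw [Pcoeff_nonflat hPZ hVE hVB S (by omega) hnl,
            if_neg (by rintro ⟨-, h⟩; exact hnl h)]
    · rw [if_neg h3, if_neg (by rintro ⟨hc, -⟩; omega)]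
  rw [Finset.sum_congr rfl hterm]
  decide

include hPZ hVE hVB in
lemma Zcoeff1_V : (Z V).coeff 1 = (P V).coeff 1 + 8 := by
  rw [Z_coeff hPZ V 1, ground_toFinset_V hVE]
  have hterm : ∀ S ∈ (Finset.univ : Finset (Fin 8)).powerset,
      (if rk V (S : Set (Fin 8)) ≤ 1
        then (P (V ⧸ (S : Set (Fin 8)))).coeff (1 - rk V (S : Set (Fin 8))) else 0)
      = (if S = ∅ then (P V).coeff 1 else 0) + (if S.card = 1 then (1 : ℤ) else 0) := by
    intro S _
    rw [rk_V_coe hVB]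
    by_cases h0 : S = ∅
    · subst h0
      have hv : vr ∅ = 0 := by decide
      rw [hv, if_pos (by omega), Finset.coe_empty, contract_empty]
      simp
    · by_cases h1 : S.card = 1
      · have hv : vr S = 1 := by simp [vr, h1]
        rw [hv, if_pos le_rfl]
        simp only [Nat.sub_self]
        rw [Pcoeff_flat hPZ hVE hVB S (by omega) (singleton_noLoop S h1)]
        rw [if_neg h0, if_pos h1]
        try ring
      · have hc2 : 2 ≤ S.card := by
          have h1' := Finset.card_pos.mpr (Finset.nonempty_of_ne_empty h0)
          omega
        have hv : 2 ≤ vr S := by unfold vr; split_ifs <;> omega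
        rw [if_neg (by omega), if_neg h0, if_neg h1]
        try ring
  rw [Finset.sum_congr rfl hterm, Finset.sum_add_distrib]
  have h8 : (∑ S ∈ (Finset.univ : Finset (Fin 8)).powerset,
      (if S.card = 1 then (1 : ℤ) else 0)) = 8 := by decide
  rw [h8, Finset.sum_ite_eq' ((Finset.univ : Finset (Fin 8)).powerset) (∅ : Finset (Fin 8))
    (fun _ => (P V).coeff 1), if_pos (Finset.empty_mem_powerset _)]

include hPZ hVE hVB in
theorem vamos_final : P V = 1 + Polynomial.C (33 : ℤ) * Polynomial.X := by
  have hc0 : (P V).coeff 0 = 1 := by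
    refine coeff0_P_loopless hPZ (by rw [rank_V hVE hVB]; omega) ?_
    intro e _
    have h : ({e} : Set (Fin 8)) = (({e} : Finset (Fin 8)) : Set (Fin 8)) := by simp
    rw [h, rk_V_coe hVB]
    exact singleton_vr e
  have hpal := (hPZ.2.2.1 V).2 1 (by rw [rank_V hVE hVB]; omega)
  rw [rank_V hVE hVB, show (4 : ℕ) - 1 = 3 from rfl] at hpal
  rw [Zcoeff1_V hPZ hVE hVB, Zcoeff3_V hPZ hVE hVB] at hpal
  have hc1 : (P V).coeff 1 = 33 := by omega
  have hPne : P V ≠ 0 := fun h => by simp [h] at hc0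
  have hdeg : (P V).natDegree ≤ 1 := by
    rcases hPZ.2.1 V (by rw [hVE]; exact Set.univ_nonempty.ne_empty) with h | h
    · exact absurd h hPne
    · rw [rank_V hVE hVB] at h
      omega
  have heq := Polynomial.eq_X_add_C_of_natDegree_le_one hdeg
  rw [hc0, hc1] at heq
  rw [heq, map_one]
  ring

end Final



/-- Let `V` be the Vámos matroid: the rank-4 matroid on the 8-element
ground set `{1,…,8}` (here represented by `Fin 8`, with `i ∈ {1,…,8}` corresponding to
`i - 1 : Fin 8`) whose bases are all 4-element subsets except the five sets
`{1,2,3,4}, {1,2,5,6}, {3,4,5,6}, {3,4,7,8}, {5,6,7,8}`.  Then `P_V(t) = 1 + 33t`. -/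
theorem vamos_KL_polynomial
    (P Z : Matroid (Fin 8) → Polynomial ℤ) (hPZ : PZaxioms P Z)
    (V : Matroid (Fin 8)) (hVE : V.E = Set.univ)
    (hVB : ∀ B : Set (Fin 8), V.IsBase B ↔ B.ncard = 4 ∧
        B ∉ ({{0, 1, 2, 3}, {0, 1, 4, 5}, {2, 3, 4, 5}, {2, 3, 6, 7}, {4, 5, 6, 7}} :
          Set (Set (Fin 8)))) :
    P V = 1 + C 33 * X := by
  exact vamos_final hPZ hVE hVB

end KLPaper
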